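/- Let p, q ≥ 2 be coprime integers and let Π be the group with presentation ⟨a, b | aᵖ = b^q⟩. Let ρ : Π → SL(2, ℂ) be a representation whose induced action on ℂ² is irreducible. Then there exist integers α and β with 1 ≤ α ≤ p−1, 1 ≤ β ≤ q−1 and α ≡ β (mod 2) such that tr ρ(a) = 2·cos(απ/p) and tr ρ(b) = 2·cos(βπ/q). -/

import Mathlib

/-- The single relation `a^p b^{-q}` of the torus knot group `⟨a, b | a^p = b^q⟩`,
where `a` and `b` are the generators indexed by `true` and `false`. -/
def torusRels (p q : ℤ) : Set (FreeGroup Bool) :=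
  {FreeGroup.of true ^ p * (FreeGroup.of false ^ q)⁻¹}

/-- The torus knot group `Π = ⟨a, b | a^p = b^q⟩`. -/
abbrev TorusGroup (p q : ℤ) := PresentedGroup (torusRels p q)

/-- A representation `ρ : G → SL(2,ℂ)` acts irreducibly on `ℂ²` if no one-dimensional
subspace of `ℂ²` is invariant under `ρ(g)` for all `g ∈ G`. -/
def IrreducibleSL2 {G : Type} [Group G]
    (ρ : G →* Matrix.SpecialLinearGroup (Fin 2) ℂ) : Prop :=
  ¬ ∃ W : Submodule ℂ (Fin 2 → ℂ), Module.finrank ℂ W = 1 ∧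
      ∀ g : G, ∀ v ∈ W, Matrix.mulVec ((ρ g : Matrix (Fin 2) (Fin 2) ℂ)) v ∈ W

open Matrix Complex

private lemma cayley2 (A : Matrix (Fin 2) (Fin 2) ℂ) :
    A * A - A.trace • A + A.det • (1 : Matrix (Fin 2) (Fin 2) ℂ) = 0 := by
  ext i j
  fin_cases i <;> fin_cases j <;>
    simp [Matrix.mul_apply, Fin.sum_univ_two, Matrix.trace_fin_two, Matrix.det_fin_two,
      Matrix.one_apply] <;> ring

private lemma binom (N : Matrix (Fin 2) (Fin 2) ℂ) (hN : N * N = 0) (lam : ℂ) :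
    ∀ n : ℕ, (lam • (1 : Matrix (Fin 2) (Fin 2) ℂ) + N) ^ (n + 1)
      = lam ^ (n + 1) • (1 : Matrix (Fin 2) (Fin 2) ℂ) + (((n : ℂ) + 1) * lam ^ n) • N
  | 0 => by simp
  | (n + 1) => by
    rw [pow_succ, binom N hN lam n]
    rw [add_mul, mul_add, mul_add, smul_mul_assoc, smul_mul_assoc, smul_mul_assoc,
      smul_mul_assoc, hN, smul_zero, one_mul, mul_smul_comm, mul_one]
    rw [one_mul]
    push_cast
    module

private lemma smul_vec_cancel {c d : ℂ} {v : Fin 2 → ℂ} (hv : v ≠ 0)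
    (h : c • v = d • v) : c = d := by
  by_contra hcd
  apply hv
  have : (c - d) • v = 0 := by rw [sub_smul, h, sub_self]
  rcases smul_eq_zero.mp this with h' | h'
  · exact absurd (sub_eq_zero.mp h') hcd
  · exact h'

private lemma trace_lemma (A : Matrix (Fin 2) (Fin 2) ℂ) (hdet : A.det = 1)
    (hns : ∀ c : ℂ, A ≠ c • 1) (n : ℕ) (hn : 2 ≤ n) (ε : ℂ)
    (hA : A ^ n = ε • (1 : Matrix (Fin 2) (Fin 2) ℂ)) (hε : ε = 1 ∨ ε = -1) :
    ∃ α : ℤ, 1 ≤ α ∧ α ≤ (n : ℤ) - 1 ∧ (-1 : ℂ) ^ α = ε ∧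
      A.trace = 2 * Complex.cos ((α : ℂ) * (Real.pi : ℂ) / (n : ℂ)) := by
  have hn0 : (n : ℂ) ≠ 0 := Nat.cast_ne_zero.mpr (by omega)
  -- eigenvalue and eigenvector
  obtain ⟨lam, hlam⟩ := Module.End.exists_eigenvalue (Matrix.mulVecLin A)
  obtain ⟨v, hv⟩ := hlam.exists_hasEigenvector
  have hvne : v ≠ 0 := hv.right
  have hAv : A.mulVec v = lam • v := hv.apply_eq_smul
  -- powers
  have hpow : ∀ m : ℕ, (A ^ m).mulVec v = lam ^ m • v := by
    intro m
    induction m with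
    | zero => simp [Matrix.one_mulVec]
    | succ m ih =>
      rw [pow_succ, ← Matrix.mulVec_mulVec, hAv, Matrix.mulVec_smul, ih, smul_smul,
        pow_succ, mul_comm]
  -- lam ^ n = ε
  have hlamn : lam ^ n = ε := by
    apply smul_vec_cancel hvne
    rw [← hpow n, hA, Matrix.smul_mulVec, Matrix.one_mulVec]
  -- quadratic equation for lam
  set t := A.trace with htdef
  have hquad : lam ^ 2 - t * lam + 1 = 0 := by
    have h0 := congrArg (fun B => Matrix.mulVec B v) (cayley2 A)
    simp only [Matrix.add_mulVec, Matrix.sub_mulVec, Matrix.smul_mulVec,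
      Matrix.one_mulVec, Matrix.zero_mulVec, ← Matrix.mulVec_mulVec, hAv,
      Matrix.mulVec_smul, hdet, one_smul] at h0
    have h1 : (lam ^ 2 - t * lam + 1) • v = 0 := by
      have h2 : lam ^ 2 • v - (t * lam) • v + (1 : ℂ) • v = 0 := by
        simpa [pow_two, mul_smul, ← htdef] using h0
      simpa [add_smul, sub_smul] using h2
    rcases smul_eq_zero.mp h1 with h' | h'
    · exact h'
    · exact absurd h' hvne
  have hlam0 : lam ≠ 0 := by
    intro h0
    rw [h0] at hquad
    simp at hquad
  have ht : t = lam + lam⁻¹ := by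
    field_simp
    linear_combination -hquad
  -- lam is not ±1
  have hsq : lam ^ 2 ≠ 1 := by
    intro hsq
    have hll : lam * lam = 1 := by rw [← pow_two]; exact hsq
    have hinv : lam⁻¹ = lam := inv_eq_of_mul_eq_one_right hll
    have ht2 : A.trace = 2 * lam := by rw [← htdef, ht, hinv]; ring
    set N := A - lam • (1 : Matrix (Fin 2) (Fin 2) ℂ) with hNdef
    have hc := cayley2 A
    rw [hdet, ht2] at hc
    have expand : N * N = A * A - (2 * lam) • A + (lam ^ 2) • (1 : Matrix (Fin 2) (Fin 2) ℂ) := by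
      simp only [hNdef, sub_mul, mul_sub, Matrix.smul_mul, Matrix.mul_smul, smul_smul,
        one_mul, mul_one]
      module
    have hNN : N * N = 0 := by
      rw [expand, hsq]
      convert hc using 2
    have hAN : A = lam • 1 + N := by rw [hNdef]; abel
    obtain ⟨m, rfl⟩ : ∃ m, n = m + 1 := ⟨n - 1, by omega⟩
    have hbin := binom N hNN lam m
    rw [← hAN, hA] at hbin
    have hcoef : ((m : ℂ) + 1) * lam ^ m ≠ 0 :=
      mul_ne_zero (Nat.cast_add_one_ne_zero m) (pow_ne_zero _ hlam0)
    have hNsc : N = ((((m : ℂ) + 1) * lam ^ m)⁻¹ * (ε - lam ^ (m + 1))) •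
        (1 : Matrix (Fin 2) (Fin 2) ℂ) := by
      have h3 : (((m : ℂ) + 1) * lam ^ m) • N = (ε - lam ^ (m + 1)) • 1 := by
        rw [sub_smul]
        exact eq_sub_of_add_eq' hbin.symm
      rw [mul_smul, ← h3, smul_smul, inv_mul_cancel₀ hcoef, one_smul]
    set d := (((m : ℂ) + 1) * lam ^ m)⁻¹ * (ε - lam ^ (m + 1)) with hd
    have h4 : (d * d) • (1 : Matrix (Fin 2) (Fin 2) ℂ) = 0 := by
      calc (d * d) • (1 : Matrix (Fin 2) (Fin 2) ℂ)
          = (d • 1) * (d • 1) := by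
            rw [Matrix.smul_mul, Matrix.mul_smul, smul_smul, mul_one]
        _ = N * N := by rw [← hNsc]
        _ = 0 := hNN
    have hdd : d = 0 := by
      rcases smul_eq_zero.mp h4 with h' | h'
      · exact mul_self_eq_zero.mp h'
      · exact absurd h' one_ne_zero
    apply hns lam
    rw [hAN, hNsc, hdd, zero_smul, add_zero]
  have hlam1 : lam ≠ 1 := fun h => hsq (by rw [h]; ring)
  have hlamm1 : lam ≠ -1 := fun h => hsq (by rw [h]; ring)
  -- roots of unity
  have h2n0 : 2 * n ≠ 0 := by omega
  haveI : NeZero (2 * n) := ⟨h2n0⟩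
  have h2n : lam ^ (2 * n) = 1 := by
    rw [mul_comm, pow_mul, hlamn]
    rcases hε with h | h <;> rw [h] <;> ring
  obtain ⟨k, hk, hkl⟩ :=
    (Complex.isPrimitiveRoot_exp (2 * n) h2n0).eq_pow_of_pow_eq_one h2n
  set θ : ℂ := (k : ℂ) * (Real.pi : ℂ) / (n : ℂ) with hθ
  have hlexp : lam = Complex.exp (θ * Complex.I) := by
    rw [← hkl, ← Complex.exp_nat_mul]
    congr 1
    rw [hθ]
    field_simp
    push_cast
    ring
  have hk0 : k ≠ 0 := by
    intro h0
    apply hlam1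
    rw [hlexp, hθ, h0]
    simp
  have hkn : k ≠ n := by
    intro h0
    apply hlamm1
    rw [hlexp, hθ, h0,
      show (n : ℂ) * (Real.pi : ℂ) / (n : ℂ) * Complex.I = (Real.pi : ℂ) * Complex.I by
        field_simp]
    exact Complex.exp_pi_mul_I
  have htr : A.trace = 2 * Complex.cos θ := by
    rw [← htdef, ht, hlexp, ← Complex.exp_neg,
      show -(θ * Complex.I) = (-θ) * Complex.I by ring,
      Complex.exp_mul_I, Complex.exp_mul_I, Complex.cos_neg, Complex.sin_neg]
    ring
  have hparity : (-1 : ℂ) ^ k = ε := by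
    rw [← hlamn, hlexp, ← Complex.exp_nat_mul, ← Complex.exp_pi_mul_I, ← Complex.exp_nat_mul]
    congr 1
    rw [hθ]
    field_simp
  rcases lt_or_gt_of_ne hkn with hlt | hgt
  · refine ⟨(k : ℤ), ?_, by omega, ?_, ?_⟩
    · have : 1 ≤ k := Nat.one_le_iff_ne_zero.mpr hk0
      omega
    · rw [zpow_natCast]; exact hparity
    · rw [htdef, htr, hθ]; norm_num
  · refine ⟨2 * (n : ℤ) - (k : ℤ), by omega, by omega, ?_, ?_⟩
    · have h6 : (-1 : ℂ) ^ (k : ℤ) = ε := by rw [zpow_natCast]; exact hparity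
      have h5 : (-1 : ℂ) ^ (2 * (n : ℤ) - (k : ℤ)) * ε = 1 := by
        rw [← h6, ← zpow_add₀ (by norm_num : (-1 : ℂ) ≠ 0),
          show 2 * (n : ℤ) - (k : ℤ) + (k : ℤ) = ((2 * n : ℕ) : ℤ) by push_cast; ring,
          zpow_natCast, pow_mul]
        norm_num
      rcases hε with h | h <;> rw [h] at h5 ⊢
      · simpa using h5
      · linear_combination -h5
    · have harg : ((2 * (n : ℤ) - (k : ℤ) : ℤ) : ℂ) * (Real.pi : ℂ) / (n : ℂ)
          = 2 * (Real.pi : ℂ) - θ := by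
        rw [hθ]
        push_cast
        field_simp
      rw [htdef, htr, harg, Complex.cos_two_pi_sub]

private lemma common_eig {G : Type} [Group G]
    (ρ : G →* Matrix.SpecialLinearGroup (Fin 2) ℂ) (v : Fin 2 → ℂ) (hv : v ≠ 0)
    (h : ∀ g : G, ∃ c : ℂ, ((ρ g : Matrix (Fin 2) (Fin 2) ℂ)).mulVec v = c • v) :
    ¬ IrreducibleSL2 ρ := by
  intro hirr
  refine hirr ⟨Submodule.span ℂ {v}, finrank_span_singleton hv, ?_⟩
  intro g w hw
  obtain ⟨d, rfl⟩ := Submodule.mem_span_singleton.mp hw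
  obtain ⟨c, hc⟩ := h g
  rw [Matrix.mulVec_smul, hc]
  exact Submodule.smul_mem _ _ (Submodule.mem_span_singleton.mpr ⟨c, rfl⟩)

private lemma schur {G : Type} [Group G]
    (ρ : G →* Matrix.SpecialLinearGroup (Fin 2) ℂ) (hirr : IrreducibleSL2 ρ)
    (M : Matrix (Fin 2) (Fin 2) ℂ)
    (hcomm : ∀ g : G, M * (ρ g : Matrix (Fin 2) (Fin 2) ℂ) = (ρ g : Matrix (Fin 2) (Fin 2) ℂ) * M) :
    ∃ lam : ℂ, M = lam • (1 : Matrix (Fin 2) (Fin 2) ℂ) := by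
  obtain ⟨μ, hμ⟩ := Module.End.exists_eigenvalue (Matrix.mulVecLin M)
  set E := Module.End.eigenspace (Matrix.mulVecLin M) μ with hE
  have hmem : ∀ w : Fin 2 → ℂ, w ∈ E ↔ M.mulVec w = μ • w := by
    intro w
    rw [hE, Module.End.mem_eigenspace_iff]
    rfl
  have hEbot : E ≠ ⊥ := hμ
  have hfr : Module.finrank ℂ E ≤ 2 := by
    have := Submodule.finrank_le E
    simpa using this
  have hfr1 : 1 ≤ Module.finrank ℂ E := by
    rw [Nat.one_le_iff_ne_zero]
    intro h0
    exact hEbot (Submodule.finrank_eq_zero.mp h0)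
  interval_cases hfin : (Module.finrank ℂ E)
  · -- finrank = 1 : contradiction with irreducibility
    exfalso
    refine hirr ⟨E, hfin, ?_⟩
    intro g w hw
    rw [hmem] at hw ⊢
    rw [Matrix.mulVec_mulVec, hcomm g, ← Matrix.mulVec_mulVec, hw, Matrix.mulVec_smul]
  · -- finrank = 2 : M is scalar
    have hEtop : E = ⊤ := Submodule.eq_top_of_finrank_eq (by simp [hfin])
    refine ⟨μ, ?_⟩
    ext i j
    have := (hmem (Pi.single j 1)).mp (hEtop ▸ Submodule.mem_top)
    have h2 := congrFun this i
    simpa [Matrix.mulVec_single, Matrix.one_apply, Pi.single_apply] using h2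

private lemma notscalar (p q : ℤ)
    (ρ : TorusGroup p q →* Matrix.SpecialLinearGroup (Fin 2) ℂ)
    (hirr : IrreducibleSL2 ρ) (x : Bool) (c : ℂ) :
    ((ρ (PresentedGroup.of x) : Matrix.SpecialLinearGroup (Fin 2) ℂ) :
        Matrix (Fin 2) (Fin 2) ℂ) ≠ c • 1 := by
  intro hx
  obtain ⟨μ, hμ⟩ := Module.End.exists_eigenvalue
    (Matrix.mulVecLin ((ρ (PresentedGroup.of (!x)) : Matrix.SpecialLinearGroup (Fin 2) ℂ) :
      Matrix (Fin 2) (Fin 2) ℂ))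
  obtain ⟨v, hv⟩ := hμ.exists_hasEigenvector
  have hvne : v ≠ 0 := hv.right
  have hveq : ((ρ (PresentedGroup.of (!x)) : Matrix.SpecialLinearGroup (Fin 2) ℂ) :
      Matrix (Fin 2) (Fin 2) ℂ).mulVec v = μ • v := hv.apply_eq_smul
  have hinvg : ∀ g : TorusGroup p q,
      ((ρ g⁻¹ : Matrix.SpecialLinearGroup (Fin 2) ℂ) : Matrix (Fin 2) (Fin 2) ℂ).mulVec
        (((ρ g : Matrix.SpecialLinearGroup (Fin 2) ℂ) :
          Matrix (Fin 2) (Fin 2) ℂ).mulVec v) = v := by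
    intro g
    rw [Matrix.mulVec_mulVec, ← Matrix.SpecialLinearGroup.coe_mul, ← _root_.map_mul,
      inv_mul_cancel, _root_.map_one, Matrix.SpecialLinearGroup.coe_one, Matrix.one_mulVec]
  set S : Subgroup (TorusGroup p q) :=
    { carrier := {g | ∃ c' : ℂ, ((ρ g : Matrix.SpecialLinearGroup (Fin 2) ℂ) :
          Matrix (Fin 2) (Fin 2) ℂ).mulVec v = c' • v}
      one_mem' := ⟨1, by simp [Matrix.one_mulVec]⟩
      mul_mem' := by
        rintro g h ⟨cg, hcg⟩ ⟨ch, hch⟩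
        refine ⟨cg * ch, ?_⟩
        rw [_root_.map_mul, Matrix.SpecialLinearGroup.coe_mul, ← Matrix.mulVec_mulVec, hch,
          Matrix.mulVec_smul, hcg, smul_smul, mul_comm]
      inv_mem' := by
        rintro g ⟨cg, hcg⟩
        have hc0 : cg ≠ 0 := by
          intro h0
          apply hvne
          have := hinvg g
          rw [hcg, h0, zero_smul, Matrix.mulVec_zero] at this
          exact this.symm
        refine ⟨cg⁻¹, ?_⟩
        have h8 := hinvg g
        rw [hcg, Matrix.mulVec_smul] at h8
        calc ((ρ g⁻¹ : Matrix.SpecialLinearGroup (Fin 2) ℂ) :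
              Matrix (Fin 2) (Fin 2) ℂ).mulVec v
            = cg⁻¹ • (cg • ((ρ g⁻¹ : Matrix.SpecialLinearGroup (Fin 2) ℂ) :
              Matrix (Fin 2) (Fin 2) ℂ).mulVec v) := by
              rw [smul_smul, inv_mul_cancel₀ hc0, one_smul]
          _ = cg⁻¹ • v := by rw [h8] } with hS
  have hle : Subgroup.closure
      (Set.range (PresentedGroup.of : Bool → TorusGroup p q)) ≤ S := by
    rw [Subgroup.closure_le]
    rintro _ ⟨z, rfl⟩
    have hz : z = x ∨ z = !x := by cases z <;> cases x <;> simp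
    rcases hz with rfl | rfl
    · exact ⟨c, by rw [hx, Matrix.smul_mulVec, Matrix.one_mulVec]⟩
    · exact ⟨μ, hveq⟩
  have hall : ∀ g : TorusGroup p q, ∃ c' : ℂ,
      ((ρ g : Matrix.SpecialLinearGroup (Fin 2) ℂ) :
        Matrix (Fin 2) (Fin 2) ℂ).mulVec v = c' • v := by
    intro g
    have : g ∈ S := by
      apply hle
      rw [PresentedGroup.closure_range_of]
      trivial
    exact this
  exact common_eig ρ v hvne hall hirr

open Real in
/-- For an irreducible `SL(2,ℂ)`-representation `ρ` of `⟨a, b | a^p = b^q⟩` there is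
an admissible pair `(α, β)` with `tr ρ(a) = 2 cos(απ/p)` and `tr ρ(b) = 2 cos(βπ/q)`. -/
theorem trace_of_irreducible_rep (p q : ℤ) (hp : 2 ≤ p) (hq : 2 ≤ q)
    (hpq : IsCoprime p q)
    (ρ : TorusGroup p q →* Matrix.SpecialLinearGroup (Fin 2) ℂ)
    (hirr : IrreducibleSL2 ρ) :
    ∃ α β : ℤ, 1 ≤ α ∧ α ≤ p - 1 ∧ 1 ≤ β ∧ β ≤ q - 1 ∧ Int.ModEq 2 α β ∧
      Matrix.trace ((ρ (PresentedGroup.of true) : Matrix.SpecialLinearGroup (Fin 2) ℂ) :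
          Matrix (Fin 2) (Fin 2) ℂ)
        = 2 * Complex.cos ((α : ℂ) * (π : ℂ) / (p : ℂ)) ∧
      Matrix.trace ((ρ (PresentedGroup.of false) : Matrix.SpecialLinearGroup (Fin 2) ℂ) :
          Matrix (Fin 2) (Fin 2) ℂ)
        = 2 * Complex.cos ((β : ℂ) * (π : ℂ) / (q : ℂ)) := by
  have hp2 : (2:ℤ) ≤ p := hp
  set n : ℕ := p.toNat with hndef
  set m : ℕ := q.toNat with hmdef
  have hnp : (n : ℤ) = p := Int.toNat_of_nonneg (by omega)
  have hmq : (m : ℤ) = q := Int.toNat_of_nonneg (by omega)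
  have hn2 : 2 ≤ n := by omega
  have hm2 : 2 ≤ m := by omega
  set ga : TorusGroup p q := PresentedGroup.of true with hga
  set gb : TorusGroup p q := PresentedGroup.of false with hgb
  -- the relation
  have h1 : (PresentedGroup.mk (torusRels p q))
      (FreeGroup.of true ^ p * (FreeGroup.of false ^ q)⁻¹) = 1 :=
    (QuotientGroup.eq_one_iff _).mpr (Subgroup.subset_normalClosure rfl)
  rw [_root_.map_mul, _root_.map_inv, _root_.map_zpow, _root_.map_zpow] at h1
  have hab : ga ^ p = gb ^ q := by
    rw [hga, hgb]
    exact mul_inv_eq_one.mp h1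
  have hrel : ga ^ n = gb ^ m := by
    rw [← zpow_natCast ga n, ← zpow_natCast gb m, hnp, hmq]
    exact hab
  -- centrality of ga ^ n
  have hcen : ∀ g : TorusGroup p q, ga ^ n * g = g * (ga ^ n) := by
    have hle : Subgroup.closure (Set.range (PresentedGroup.of : Bool → TorusGroup p q))
        ≤ Subgroup.centralizer {ga ^ n} := by
      rw [Subgroup.closure_le]
      rintro _ ⟨z, rfl⟩
      rw [SetLike.mem_coe, Subgroup.mem_centralizer_iff]
      rintro h rfl
      cases z
      · rw [← hgb, hrel]
        exact ((Commute.refl gb).pow_left m).eq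
      · rw [← hga]
        exact ((Commute.refl ga).pow_left n).eq
    intro g
    have hg : g ∈ Subgroup.centralizer {ga ^ n} := by
      apply hle
      rw [PresentedGroup.closure_range_of]
      trivial
    exact Subgroup.mem_centralizer_iff.mp hg _ rfl
  -- matrices
  set A : Matrix (Fin 2) (Fin 2) ℂ :=
    ((ρ ga : Matrix.SpecialLinearGroup (Fin 2) ℂ) : Matrix (Fin 2) (Fin 2) ℂ) with hA
  set B : Matrix (Fin 2) (Fin 2) ℂ :=
    ((ρ gb : Matrix.SpecialLinearGroup (Fin 2) ℂ) : Matrix (Fin 2) (Fin 2) ℂ) with hB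
  have hAn : A ^ n = ((ρ (ga ^ n) : Matrix.SpecialLinearGroup (Fin 2) ℂ) :
      Matrix (Fin 2) (Fin 2) ℂ) := by
    rw [_root_.map_pow, Matrix.SpecialLinearGroup.coe_pow, hA]
  have hBm : B ^ m = ((ρ (ga ^ n) : Matrix.SpecialLinearGroup (Fin 2) ℂ) :
      Matrix (Fin 2) (Fin 2) ℂ) := by
    rw [hrel, _root_.map_pow, Matrix.SpecialLinearGroup.coe_pow, hB]
  -- Schur applied to A ^ n
  have hcomm : ∀ g : TorusGroup p q,
      (A ^ n) * ((ρ g : Matrix.SpecialLinearGroup (Fin 2) ℂ) : Matrix (Fin 2) (Fin 2) ℂ)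
      = ((ρ g : Matrix.SpecialLinearGroup (Fin 2) ℂ) : Matrix (Fin 2) (Fin 2) ℂ) * (A ^ n) := by
    intro g
    rw [hAn, ← Matrix.SpecialLinearGroup.coe_mul, ← Matrix.SpecialLinearGroup.coe_mul,
      ← _root_.map_mul, ← _root_.map_mul, hcen g]
  obtain ⟨ε, hε⟩ := schur ρ hirr (A ^ n) hcomm
  have hdetA : A.det = 1 := by rw [hA]; exact (ρ ga).prop
  have hdetB : B.det = 1 := by rw [hB]; exact (ρ gb).prop
  have hε2 : ε ^ 2 = 1 := by
    have hd : (A ^ n).det = 1 := by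
      rw [Matrix.det_pow, hdetA, one_pow]
    rw [hε, Matrix.det_smul, Matrix.det_one, mul_one] at hd
    simpa using hd
  have hεor : ε = 1 ∨ ε = -1 := by
    have h0 : (ε - 1) * (ε + 1) = 0 := by linear_combination hε2
    rcases mul_eq_zero.mp h0 with h' | h'
    · exact Or.inl (by linear_combination h')
    · exact Or.inr (by linear_combination h')
  obtain ⟨α, hα1, hα2, hαε, hαtr⟩ :=
    trace_lemma A hdetA (fun c => notscalar p q ρ hirr true c) n hn2 ε hε hεor
  obtain ⟨β, hβ1, hβ2, hβε, hβtr⟩ :=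
    trace_lemma B hdetB (fun c => notscalar p q ρ hirr false c) m hm2 ε
      (by rw [hBm, ← hAn, hε]) hεor
  have hmod : Int.ModEq 2 α β := by
    have h9 : (-1 : ℂ) ^ (α - β) = 1 := by
      rw [zpow_sub₀ (by norm_num : (-1 : ℂ) ≠ 0), hαε, hβε, div_self]
      rcases hεor with h | h <;> rw [h] <;> norm_num
    rcases Int.even_or_odd (α - β) with he | ho
    · obtain ⟨cc, hcc⟩ := he
      exact Int.modEq_iff_dvd.mpr ⟨-cc, by omega⟩
    · rw [ho.neg_one_zpow] at h9
      norm_num at h9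
  refine ⟨α, β, hα1, by omega, hβ1, by omega, hmod, ?_, ?_⟩
  · rw [hαtr, show ((n : ℕ) : ℂ) = ((p : ℤ) : ℂ) by rw [← hnp]; push_cast; ring]
  · rw [hβtr, show ((m : ℕ) : ℂ) = ((q : ℤ) : ℂ) by rw [← hmq]; push_cast; ring]
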